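/- Let N be a positive integer and let J_N = {(i,j) : 1 ≤ i ≤ j ≤ N}. The smallest cardinality of an admissible partition of J_N is exactly N; that is, there exists an admissible partition of J_N with N blocks, and every admissible partition of J_N has at least N blocks. -/

import Mathlib

/-- `J N` is the set of pairs `(i, j)` with `1 ≤ i ≤ j ≤ N`. -/
def J (N : ℕ) : Finset (ℕ × ℕ) :=
  (Finset.Icc 1 N ×ˢ Finset.Icc 1 N).filter fun p => p.1 ≤ p.2

/-- A partition of `J N` is admissible if its blocks are nonempty subsets of `J N`,
every element of `J N` lies in exactly one block, and within each block any two
distinct pairs share no coordinate. -/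
def IsAdmissiblePartition (N : ℕ) (P : Finset (Finset (ℕ × ℕ))) : Prop :=
  (∀ B ∈ P, B.Nonempty) ∧
  (∀ B ∈ P, B ⊆ J N) ∧
  (∀ p ∈ J N, ∃! B, B ∈ P ∧ p ∈ B) ∧
  (∀ B ∈ P, ∀ p ∈ B, ∀ q ∈ B, p ≠ q →
    p.1 ≠ q.1 ∧ p.1 ≠ q.2 ∧ p.2 ≠ q.1 ∧ p.2 ≠ q.2)

lemma mem_J_iff {N : ℕ} {p : ℕ × ℕ} : p ∈ J N ↔ 1 ≤ p.1 ∧ p.1 ≤ p.2 ∧ p.2 ≤ N := by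
  simp only [J, Finset.mem_filter, Finset.mem_product, Finset.mem_Icc]
  omega

/-- elements of `[1,N]` are determined by their residue mod `N`. -/
lemma mod_cancel {N x y : ℕ} (hx1 : 1 ≤ x) (hxN : x ≤ N) (hy1 : 1 ≤ y) (hyN : y ≤ N)
    (h : x % N = y % N) : x = y := by
  by_cases h1 : x < N <;> by_cases h2 : y < N
  · rwa [Nat.mod_eq_of_lt h1, Nat.mod_eq_of_lt h2] at h
  · have hy : y = N := le_antisymm hyN (not_lt.mp h2)
    subst hy
    rw [Nat.mod_self, Nat.mod_eq_of_lt h1] at h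
    omega
  · have hx : x = N := le_antisymm hxN (not_lt.mp h1)
    subst hx
    rw [Nat.mod_self, Nat.mod_eq_of_lt h2] at h
    omega
  · omega

lemma add_mod_cancel_left {N a b c : ℕ} (h : (a + b) % N = (a + c) % N) : b % N = c % N :=
  Nat.ModEq.add_left_cancel' a h

/-- The `k`-th block of the explicit partition. -/
def blockB (N k : ℕ) : Finset (ℕ × ℕ) :=
  (J N).filter fun p => (p.1 + p.2) % N = k

lemma mem_blockB {N k : ℕ} {p : ℕ × ℕ} :
    p ∈ blockB N k ↔ p ∈ J N ∧ (p.1 + p.2) % N = k := Finset.mem_filter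

/-- Each block is nonempty for `k < N`. -/
lemma blockB_nonempty {N k : ℕ} (hN : 0 < N) (hk : k < N) : (blockB N k).Nonempty := by
  refine ⟨(if k = 0 then N else k, N), ?_⟩
  rw [mem_blockB, mem_J_iff]
  by_cases h : k = 0
  · subst h
    simp only [if_pos rfl]
    refine ⟨⟨hN, le_refl N, le_refl N⟩, ?_⟩
    simp [Nat.add_mod, Nat.mod_self]
  · simp only [if_neg h]
    refine ⟨⟨by omega, by omega, le_refl N⟩, ?_⟩
    rw [Nat.add_mod_right, Nat.mod_eq_of_lt hk]

/-- The blocks satisfy the admissibility condition. -/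
lemma blockB_admissible {N k : ℕ} {p q : ℕ × ℕ} (hp : p ∈ blockB N k) (hq : q ∈ blockB N k)
    (hpq : p ≠ q) : p.1 ≠ q.1 ∧ p.1 ≠ q.2 ∧ p.2 ≠ q.1 ∧ p.2 ≠ q.2 := by
  rw [mem_blockB, mem_J_iff] at hp hq
  obtain ⟨⟨hp1, hp12, hp2⟩, hpk⟩ := hp
  obtain ⟨⟨hq1, hq12, hq2⟩, hqk⟩ := hq
  have hmod : (p.1 + p.2) % N = (q.1 + q.2) % N := hpk.trans hqk.symm
  refine ⟨?_, ?_, ?_, ?_⟩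
  · intro h
    have e : (p.1 + p.2) % N = (p.1 + q.2) % N := by rw [show p.1 + q.2 = q.1 + q.2 by omega]; exact hmod
    have h2 := add_mod_cancel_left e
    exact hpq (Prod.ext h (mod_cancel (by omega) hp2 (by omega) hq2 h2))
  · intro h
    have e : (q.2 + p.2) % N = (q.2 + q.1) % N := by
      rw [show q.2 + p.2 = p.1 + p.2 by omega, show q.2 + q.1 = q.1 + q.2 by omega]
      exact hmod
    have h2 := add_mod_cancel_left e
    have h3 : p.2 = q.1 := mod_cancel (by omega) hp2 hq1 (by omega) h2
    exact hpq (Prod.ext (by omega) (by omega))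
  · intro h
    have e : (p.2 + p.1) % N = (p.2 + q.2) % N := by
      rw [show p.2 + p.1 = p.1 + p.2 by omega, show p.2 + q.2 = q.1 + q.2 by omega]
      exact hmod
    have h2 := add_mod_cancel_left e
    have h3 : p.1 = q.2 := mod_cancel hp1 (by omega) (by omega) hq2 h2
    exact hpq (Prod.ext (by omega) (by omega))
  · intro h
    have e : (p.2 + p.1) % N = (p.2 + q.1) % N := by
      rw [show p.2 + p.1 = p.1 + p.2 by omega, show p.2 + q.1 = q.1 + q.2 by omega]
      exact hmod
    have h2 := add_mod_cancel_left e
    exact hpq (Prod.ext (mod_cancel hp1 (by omega) hq1 (by omega) h2) h)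

/-- The smallest cardinality of an admissible partition of `J N` is exactly `N`. -/
theorem smallest_admissible_partition_card (N : ℕ) (hN : 0 < N) :
    (∃ P : Finset (Finset (ℕ × ℕ)), IsAdmissiblePartition N P ∧ P.card = N) ∧
    (∀ P : Finset (Finset (ℕ × ℕ)), IsAdmissiblePartition N P → N ≤ P.card) := by
  constructor
  · -- Upper bound: explicit construction
    refine ⟨(Finset.range N).image (blockB N), ⟨?_, ?_, ?_, ?_⟩, ?_⟩
    · intro B hB
      obtain ⟨k, hk, rfl⟩ := Finset.mem_image.mp hB
      exact blockB_nonempty hN (Finset.mem_range.mp hk)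
    · intro B hB
      obtain ⟨k, hk, rfl⟩ := Finset.mem_image.mp hB
      exact Finset.filter_subset _ _
    · intro p hp
      refine ⟨blockB N ((p.1 + p.2) % N), ⟨?_, ?_⟩, ?_⟩
      · exact Finset.mem_image.mpr ⟨(p.1 + p.2) % N,
          Finset.mem_range.mpr (Nat.mod_lt _ hN), rfl⟩
      · exact mem_blockB.mpr ⟨hp, rfl⟩
      · rintro B ⟨hB, hpB⟩
        obtain ⟨k, hk, rfl⟩ := Finset.mem_image.mp hB
        rw [(mem_blockB.mp hpB).2]
    · intro B hB p hp q hq hpq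
      obtain ⟨k, hk, rfl⟩ := Finset.mem_image.mp hB
      exact blockB_admissible hp hq hpq
    · rw [Finset.card_image_of_injOn, Finset.card_range]
      intro k hk l hl h
      obtain ⟨p, hp⟩ := blockB_nonempty hN (Finset.mem_range.mp hk)
      have hp' : p ∈ blockB N l := h ▸ hp
      exact ((mem_blockB.mp hp).2.symm.trans (mem_blockB.mp hp').2)
  · -- Lower bound: the N pairs (1, j) lie in distinct blocks
    intro P hP
    obtain ⟨_, _, hcover, hadm⟩ := hP
    have hmemJ : ∀ j ∈ Finset.Icc 1 N, ((1 : ℕ), j) ∈ J N := by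
      intro j hj
      rw [Finset.mem_Icc] at hj
      rw [mem_J_iff]
      omega
    have hchoice : ∀ j ∈ Finset.Icc 1 N, ∃ B, B ∈ P ∧ (1, j) ∈ B := by
      intro j hj
      obtain ⟨B, hB, _⟩ := hcover _ (hmemJ j hj)
      exact ⟨B, hB⟩
    choose f hf1 hf2 using hchoice
    calc N = (Finset.Icc 1 N).card := by rw [Nat.card_Icc]; omega
      _ ≤ P.card := by
          apply Finset.card_le_card_of_injOn (fun j => if h : j ∈ Finset.Icc 1 N then f j h else ∅)
          · intro j hj
            simp only [Finset.mem_coe] at hj ⊢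
            simp only [dif_pos hj]
            exact hf1 j hj
          · intro j hj l hl h
            have hj' : j ∈ Finset.Icc 1 N := hj
            have hl' : l ∈ Finset.Icc 1 N := hl
            simp only [dif_pos hj', dif_pos hl'] at h
            by_contra hne
            have hne' : ((1 : ℕ), j) ≠ ((1 : ℕ), l) := by
              simp [hne]
            have hmem : ((1 : ℕ), l) ∈ f j hj' := h ▸ hf2 l hl'
            have := hadm (f j hj') (hf1 j hj') (1, j) (hf2 j hj') (1, l) hmem hne'
            exact this.1 rfl
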